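/- arXiv:1508.07267 — 2 statements merged into one kernel-verified Lean document; each statement's English description precedes it below -/
import Mathlib

section
/- Under the hypotheses of the PQD theorem (f_α all increasing, Z_α defined by swapping in coordinates of an independent copy on H_α), for every c ∈ ℝ: P(max_α f_α(Z_α) ≤ c) ≤ P(max_α f_α(X) ≤ c); equivalently max_α f_α(X) is stochastically dominated by max_α f_α(Z_α). -/
open MeasureTheory ProbabilityTheory Set Function


section Helpers

variable {ν : Measure ℝ} [IsProbabilityMeasure ν]

lemma lower_mul_le_inter {S T : Set ℝ} (hS : IsLowerSet S) (hT : IsLowerSet T) :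
    ν S * ν T ≤ ν (S ∩ T) := by
  rcases hS.total hT with h | h
  · rw [Set.inter_eq_left.mpr h]
    calc ν S * ν T ≤ ν S * 1 := by gcongr; exact prob_le_one
      _ = ν S := mul_one _
  · rw [Set.inter_eq_right.mpr h]
    calc ν S * ν T ≤ 1 * ν T := by gcongr; exact prob_le_one
      _ = ν T := one_mul _

lemma countable_atoms (ν : Measure ℝ) [IsProbabilityMeasure ν] :
    {x : ℝ | ν {x} ≠ 0}.Countable := by
  have h := Measure.countable_meas_level_set_pos (μ := ν) measurable_id
  refine h.mono fun x hx => ?_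
  simp only [mem_setOf_eq] at hx ⊢
  have : {a : ℝ | id a = x} = {x} := by ext; simp
  rw [this]
  exact pos_iff_ne_zero.mpr hx

end Helpers

section Squeeze

/-- Outer measurable lower approximation of `L` based on the countable grid `D`. -/
def Mset {k : ℕ} (D : Fin k → Set ℝ) (L : Set (Fin k → ℝ)) : Set (Fin k → ℝ) :=
  {x | ∀ q : Fin k → ℝ, (∀ i, q i ∈ D i) → q ≤ x → q ∈ L}

/-- Inner measurable lower approximation of `L` based on the countable grid `D`. -/
def Nset {k : ℕ} (D : Fin k → Set ℝ) (L : Set (Fin k → ℝ)) : Set (Fin k → ℝ) :=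
  {x | ∃ q : Fin k → ℝ, (∀ i, q i ∈ D i) ∧ q ∈ L ∧ x ≤ q}

variable {k : ℕ} {D : Fin k → Set ℝ} {L : Set (Fin k → ℝ)}

lemma subset_Mset (hL : IsLowerSet L) : L ⊆ Mset D L :=
  fun _ hx _ _ hq => hL hq hx

lemma Nset_subset (hL : IsLowerSet L) : Nset D L ⊆ L := by
  rintro x ⟨q, -, hqL, hxq⟩
  exact hL hxq hqL

lemma isLowerSet_Mset : IsLowerSet (Mset D L) :=
  fun _ y hyx hx q hq hqy => hx q hq (hqy.trans hyx)

lemma isLowerSet_Nset : IsLowerSet (Nset D L) := by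
  rintro x y hyx ⟨q, h1, h2, h3⟩
  exact ⟨q, h1, h2, hyx.trans h3⟩

lemma measurableSet_Mset (hD : ∀ i, (D i).Countable) : MeasurableSet (Mset D L) := by
  have : Mset D L = ⋂ q ∈ {q : Fin k → ℝ | (∀ i, q i ∈ D i) ∧ q ∉ L}, (Ici q)ᶜ := by
    ext x
    simp only [Mset, mem_setOf_eq, mem_iInter, mem_compl_iff, mem_Ici]
    constructor
    · rintro h q ⟨hq, hqL⟩ hqx
      exact hqL (h q hq hqx)
    · intro h q hq hqx
      by_contra hqL
      exact h q ⟨hq, hqL⟩ hqx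
  rw [this]
  exact MeasurableSet.biInter ((Set.countable_pi hD).mono (fun q hq => hq.1))
    (fun q _ => measurableSet_Ici.compl)

lemma measurableSet_Nset (hD : ∀ i, (D i).Countable) : MeasurableSet (Nset D L) := by
  have : Nset D L = ⋃ q ∈ {q : Fin k → ℝ | (∀ i, q i ∈ D i) ∧ q ∈ L}, Iic q := by
    ext x
    simp only [Nset, mem_setOf_eq, mem_iUnion, mem_Iic]
    constructor
    · rintro ⟨q, h1, h2, h3⟩; exact ⟨q, ⟨h1, h2⟩, h3⟩
    · rintro ⟨q, ⟨h1, h2⟩, h3⟩; exact ⟨q, h1, h2, h3⟩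
  rw [this]
  exact MeasurableSet.biUnion ((Set.countable_pi hD).mono (fun q hq => hq.1))
    (fun q _ => measurableSet_Iic)

end Squeeze

theorem squeeze_null : ∀ (k : ℕ) (ν : Fin k → Measure ℝ),
    (∀ i, IsProbabilityMeasure (ν i)) →
    ∀ (D : Fin k → Set ℝ), (∀ i, (D i).Countable) →
    (∀ (i) (q : ℚ), (q : ℝ) ∈ D i) →
    (∀ (i) (x : ℝ), ν i {x} ≠ 0 → x ∈ D i) →
    ∀ L : Set (Fin k → ℝ), IsLowerSet L →
    Measure.pi ν (Mset D L \ Nset D L) = 0 := by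
  intro k
  induction k with
  | zero =>
    intro ν _ D _ _ _ L _
    convert measure_empty
    · ext x
      simp only [mem_diff, mem_empty_iff_false, iff_false, not_and, not_not]
      intro hxM
      exact ⟨x, fun i => i.elim0, hxM x (fun i => i.elim0) le_rfl, le_rfl⟩
    · infer_instance
  | succ k IH =>
    intro ν hν D hDc hDq hDa L hL
    haveI := hν
    set ν' : Fin k → Measure ℝ := fun j => ν ((0 : Fin (k+1)).succAbove j) with hν'def
    haveI : ∀ j, IsProbabilityMeasure (ν' j) := fun j => hν _
    set D' : Fin k → Set ℝ := fun j => D ((0 : Fin (k+1)).succAbove j) with hD'def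
    set S : Set (Fin (k+1) → ℝ) := Mset D L \ Nset D L with hSdef
    have hS : MeasurableSet S := (measurableSet_Mset hDc).diff (measurableSet_Nset hDc)
    set e := MeasurableEquiv.piFinSuccAbove (fun _ : Fin (k+1) => ℝ) 0 with hedef
    have hesymm : ∀ (t : ℝ) (y : Fin k → ℝ), e.symm (t, y) = Fin.insertNth 0 t y := by
      intro t y; rfl
    have hmp := measurePreserving_piFinSuccAbove ν 0
    have key : Measure.pi ν S = ((ν 0).prod (Measure.pi ν')) (e.symm ⁻¹' S) := by
      rw [← hmp.map_eq, MeasurableEquiv.map_apply]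
      congr 1
      ext v
      simp only [Set.mem_preimage, MeasurableEquiv.piFinSuccAbove_apply, hesymm]
      have hv := (Fin.insertNthEquiv (fun _ : Fin (k+1) => ℝ) 0).apply_symm_apply v
      exact iff_of_eq (congrArg (· ∈ S) hv).symm
    -- the "bad" set in the lower-dimensional space
    set Kr : ℝ → Set (Fin k → ℝ) := fun r => {y | Fin.insertNth 0 r y ∈ L} with hKrdef
    have hKrLow : ∀ r, IsLowerSet (Kr r) := by
      intro r z y hyz hz
      have : Fin.insertNth (α := fun _ => ℝ) 0 r y ≤ Fin.insertNth 0 r z := by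
        rw [Fin.insertNth_le_iff]
        refine ⟨by simp, ?_⟩
        intro j; simpa using hyz j
      exact hL this hz
    set Bad : Set (Fin k → ℝ) := ⋃ r ∈ D 0, (Mset D' (Kr r) \ Nset D' (Kr r)) with hBaddef
    have hBad : Measure.pi ν' Bad = 0 := by
      rw [measure_biUnion_null_iff (hDc 0)]
      intro r _
      exact IH ν' (fun j => hν _) D' (fun j => hDc _) (fun j q => hDq _ q)
        (fun j x hx => hDa _ x hx) (Kr r) (hKrLow r)
    -- pointwise claim
    have claim : ∀ y : Fin k → ℝ, y ∉ Bad →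
        ν 0 ((fun t => (t, y)) ⁻¹' (e.symm ⁻¹' S)) = 0 := by
      intro y hy
      set sec : Set ℝ := {t | Fin.insertNth 0 t y ∈ S} with hsecdef
      have hsec : (fun t => (t, y)) ⁻¹' (e.symm ⁻¹' S) = sec := by
        ext t; simp [hesymm, hsecdef]
      rw [hsec]
      have keyA : ∀ r ∈ D 0, ∀ t1 ∈ sec, ∀ t2 ∈ sec, t1 ≤ r → r ≤ t2 → False := by
        intro r hr t1 ht1 t2 ht2 h1r hr2
        apply hy
        rw [hBaddef]
        refine mem_biUnion hr ⟨?_, ?_⟩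
        · -- y ∈ Mset D' (Kr r)
          intro q' hq' hq'y
          have hq : ∀ i, Fin.insertNth (α := fun _ => ℝ) 0 r q' i ∈ D i := by
            intro i
            refine Fin.cases ?_ ?_ i
            · simpa using hr
            · intro j
              have : Fin.insertNth (α := fun _ => ℝ) 0 r q' j.succ = q' j := by
                simpa using Fin.insertNth_apply_succAbove (0 : Fin (k+1)) r q' j
              rw [this]
              simpa [hD'def] using hq' j
          have hle : Fin.insertNth (α := fun _ => ℝ) 0 r q' ≤ Fin.insertNth 0 t2 y := by
            rw [Fin.insertNth_le_iff]
            constructor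
            · simpa using hr2
            · intro j; simpa using hq'y j
          exact ht2.1 _ hq hle
        · -- y ∉ Nset D' (Kr r)
          rintro ⟨q', hq'D, hq'K, hyq'⟩
          apply ht1.2
          refine ⟨Fin.insertNth 0 r q', ?_, hq'K, ?_⟩
          · intro i
            refine Fin.cases ?_ ?_ i
            · simpa using hr
            · intro j
              have : Fin.insertNth (α := fun _ => ℝ) 0 r q' j.succ = q' j := by
                simpa using Fin.insertNth_apply_succAbove (0 : Fin (k+1)) r q' j
              rw [this]
              simpa [hD'def] using hq'D j
          · rw [Fin.le_insertNth_iff]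
            constructor
            · simpa using h1r
            · intro j; simpa using hyq' j
      rcases Set.eq_empty_or_nonempty sec with h | ⟨t0, ht0⟩
      · rw [h]; exact measure_empty
      · have hsub : sec ⊆ {t0} := by
          intro t ht
          by_contra hne
          rcases lt_or_gt_of_ne (by simpa using hne) with hlt | hgt
          · obtain ⟨r, hr1, hr2⟩ := exists_rat_btwn hlt
            exact keyA r (hDq 0 r) t ht t0 ht0 hr1.le hr2.le
          · obtain ⟨r, hr1, hr2⟩ := exists_rat_btwn hgt
            exact keyA r (hDq 0 r) t0 ht0 t ht hr1.le hr2.le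
        have ht0atom : ν 0 {t0} = 0 := by
          by_contra h0
          exact keyA t0 (hDa 0 t0 h0) t0 ht0 t0 ht0 le_rfl le_rfl
        exact le_antisymm ((measure_mono hsub).trans ht0atom.le) zero_le
    rw [key, Measure.prod_apply_symm (e.symm.measurable hS)]
    have hae : ∀ᵐ y ∂(Measure.pi ν'),
        ν 0 ((fun t => (t, y)) ⁻¹' (e.symm ⁻¹' S)) = (fun _ => (0:ENNReal)) y := by
      filter_upwards [measure_eq_zero_iff_ae_notMem.mp hBad] with y hy
      exact claim y hy
    rw [lintegral_congr_ae hae, lintegral_zero]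

noncomputable section

variable {n : ℕ}

/-- Coordinate selection: on `H ∩ T` use the second (`Y`) block, else the first (`X`) block. -/
def sel (H T : Finset (Fin n)) (v : (Fin n ⊕ Fin n) → ℝ) : Fin n → ℝ :=
  fun i => if i ∈ H ∧ i ∈ T then v (Sum.inr i) else v (Sum.inl i)

lemma measurable_sel (H T : Finset (Fin n)) : Measurable (sel H T) := by
  apply measurable_pi_lambda
  intro i
  by_cases h : i ∈ H ∧ i ∈ T
  · simp only [sel, if_pos h]; exact measurable_pi_apply _
  · simp only [sel, if_neg h]; exact measurable_pi_apply _

lemma sel_mono (H T : Finset (Fin n)) {v w : (Fin n ⊕ Fin n) → ℝ} (h : v ≤ w) :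
    sel H T v ≤ sel H T w := by
  intro i
  by_cases hc : i ∈ H ∧ i ∈ T
  · simp only [sel, if_pos hc]; exact h _
  · simp only [sel, if_neg hc]; exact h _

theorem core_step {m : ℕ} (ν : Fin n → Measure ℝ) [hP : ∀ i, IsProbabilityMeasure (ν i)]
    (K : Fin m → Set (Fin n → ℝ)) (hKm : ∀ j, MeasurableSet (K j))
    (hKl : ∀ j, IsLowerSet (K j)) (H : Fin m → Finset (Fin n))
    {a : Fin n} {T : Finset (Fin n)} (haT : a ∉ T) :
    Measure.pi (Sum.elim ν ν) {v | ∀ j, sel (H j) (insert a T) v ∈ K j}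
      ≤ Measure.pi (Sum.elim ν ν) {v | ∀ j, sel (H j) T v ∈ K j} := by
  classical
  haveI hκP : ∀ k : Fin n ⊕ Fin n, IsProbabilityMeasure (Sum.elim ν ν k) := by
    rintro (i | i) <;> exact hP i
  set κ : Fin n ⊕ Fin n → Measure ℝ := Sum.elim ν ν with hκdef
  set A' : Set ((Fin n ⊕ Fin n) → ℝ) := {v | ∀ j, sel (H j) (insert a T) v ∈ K j} with hA'def
  set A : Set ((Fin n ⊕ Fin n) → ℝ) := {v | ∀ j, sel (H j) T v ∈ K j} with hAdef
  have hA'm : MeasurableSet A' := by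
    have : A' = ⋂ j, sel (H j) (insert a T) ⁻¹' K j := by
      ext v; simp [hA'def, Set.mem_iInter]
    rw [this]
    exact MeasurableSet.iInter fun j => (measurable_sel _ _) (hKm j)
  have hAm : MeasurableSet A := by
    have : A = ⋂ j, sel (H j) T ⁻¹' K j := by
      ext v; simp [hAdef, Set.mem_iInter]
    rw [this]
    exact MeasurableSet.iInter fun j => (measurable_sel _ _) (hKm j)
  set f' : ((Fin n ⊕ Fin n) → ℝ) → ENNReal := A'.indicator (fun _ => 1) with hf'def
  set f : ((Fin n ⊕ Fin n) → ℝ) → ENNReal := A.indicator (fun _ => 1) with hfdef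
  have hf'meas : Measurable f' := (measurable_const).indicator hA'm
  have hfmeas : Measurable f := (measurable_const).indicator hAm
  -- sets in the single coordinate
  set SF : ((Fin n ⊕ Fin n) → ℝ) → Set ℝ := fun x =>
    {t | ∀ j, a ∈ H j → sel (H j) (insert a T) (Function.update x (Sum.inr a) t) ∈ K j}
    with hSFdef
  set SG : ((Fin n ⊕ Fin n) → ℝ) → Set ℝ := fun x =>
    {s | ∀ j, a ∉ H j → sel (H j) T (Function.update x (Sum.inl a) s) ∈ K j}
    with hSGdef
  have hSFm : ∀ x, MeasurableSet (SF x) := by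
    intro x
    have : SF x = ⋂ j, ⋂ (_ : a ∈ H j),
        (fun t => sel (H j) (insert a T) (Function.update x (Sum.inr a) t)) ⁻¹' K j := by
      ext t; simp [hSFdef]
    rw [this]
    exact MeasurableSet.iInter fun j => MeasurableSet.iInter fun _ =>
      ((measurable_sel _ _).comp (measurable_update _)) (hKm j)
  have hSGm : ∀ x, MeasurableSet (SG x) := by
    intro x
    have : SG x = ⋂ j, ⋂ (_ : a ∉ H j),
        (fun s => sel (H j) T (Function.update x (Sum.inl a) s)) ⁻¹' K j := by
      ext t; simp [hSGdef]
    rw [this]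
    exact MeasurableSet.iInter fun j => MeasurableSet.iInter fun _ =>
      ((measurable_sel _ _).comp (measurable_update _)) (hKm j)
  have hupdate_mono : ∀ (x : (Fin n ⊕ Fin n) → ℝ) (k) {t t' : ℝ}, t ≤ t' →
      Function.update x k t ≤ Function.update x k t' := by
    intro x k t t' h b
    rcases eq_or_ne b k with rfl | hb
    · simpa using h
    · simp [Function.update_of_ne hb]
  have hSFl : ∀ x, IsLowerSet (SF x) := by
    intro x t' t htt' ht j hj
    exact hKl j (sel_mono _ _ (hupdate_mono x _ htt')) (ht j hj)
  have hSGl : ∀ x, IsLowerSet (SG x) := by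
    intro x t' t htt' ht j hj
    exact hKl j (sel_mono _ _ (hupdate_mono x _ htt')) (ht j hj)
  -- the key pointwise identities
  have I1 : ∀ (x : (Fin n ⊕ Fin n) → ℝ) (s t : ℝ) (j), a ∈ H j →
      sel (H j) (insert a T) (Function.update (Function.update x (Sum.inl a) s) (Sum.inr a) t)
        = sel (H j) (insert a T) (Function.update x (Sum.inr a) t) := by
    intro x s t j hj; funext i
    rcases eq_or_ne i a with rfl | hia
    · simp [sel, Function.update_apply, hj]
    · simp [sel, Function.update_apply, hia]
  have I2 : ∀ (x : (Fin n ⊕ Fin n) → ℝ) (s t : ℝ) (j), a ∉ H j →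
      sel (H j) (insert a T) (Function.update (Function.update x (Sum.inl a) s) (Sum.inr a) t)
        = sel (H j) T (Function.update x (Sum.inl a) s) := by
    intro x s t j hj; funext i
    rcases eq_or_ne i a with rfl | hia
    · simp [sel, Function.update_apply, hj]
    · simp [sel, Function.update_apply, hia]
  have I3 : ∀ (x : (Fin n ⊕ Fin n) → ℝ) (s : ℝ) (j), a ∈ H j →
      sel (H j) T (Function.update x (Sum.inl a) s)
        = sel (H j) (insert a T) (Function.update x (Sum.inr a) s) := by
    intro x s j hj; funext i
    rcases eq_or_ne i a with rfl | hia
    · simp [sel, Function.update_apply, hj, haT]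
    · simp [sel, Function.update_apply, hia]
  have I4 : ∀ (x : (Fin n ⊕ Fin n) → ℝ) (s t : ℝ) (j),
      sel (H j) T (Function.update (Function.update x (Sum.inl a) s) (Sum.inr a) t)
        = sel (H j) T (Function.update x (Sum.inl a) s) := by
    intro x s t j; funext i
    rcases eq_or_ne i a with rfl | hia
    · simp [sel, Function.update_apply, haT]
    · simp [sel, Function.update_apply, hia]
  have hmem' : ∀ (x : (Fin n ⊕ Fin n) → ℝ) (s t : ℝ),
      (Function.update (Function.update x (Sum.inl a) s) (Sum.inr a) t ∈ A')
        ↔ (t ∈ SF x ∧ s ∈ SG x) := by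
    intro x s t
    constructor
    · intro h
      refine ⟨fun j hj => ?_, fun j hj => ?_⟩
      · rw [← I1 x s t j hj]; exact h j
      · rw [← I2 x s t j hj]; exact h j
    · rintro ⟨h1, h2⟩ j
      by_cases hj : a ∈ H j
      · rw [I1 x s t j hj]; exact h1 j hj
      · rw [I2 x s t j hj]; exact h2 j hj
  have hmem : ∀ (x : (Fin n ⊕ Fin n) → ℝ) (s t : ℝ),
      (Function.update (Function.update x (Sum.inl a) s) (Sum.inr a) t ∈ A)
        ↔ (s ∈ SF x ∧ s ∈ SG x) := by
    intro x s t
    constructor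
    · intro h
      refine ⟨fun j hj => ?_, fun j hj => ?_⟩
      · rw [← I3 x s j hj, ← I4 x s t j]; exact h j
      · rw [← I4 x s t j]; exact h j
    · rintro ⟨h1, h2⟩ j
      rw [I4 x s t j]
      by_cases hj : a ∈ H j
      · rw [I3 x s j hj]; exact h1 j hj
      · exact h2 j hj
  -- lmarginal computation
  haveI : ∀ k : Fin n ⊕ Fin n, SigmaFinite (κ k) := fun k => inferInstance
  set pair : Finset (Fin n ⊕ Fin n) := {Sum.inl a, Sum.inr a} with hpairdef
  have hpair_disj : Disjoint (Finset.univ \ pair) pair := Finset.sdiff_disjoint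
  have hsplit : (Finset.univ \ pair) ∪ pair = Finset.univ :=
    Finset.sdiff_union_of_subset (Finset.subset_univ _)
  have hpairmarg : ∀ (g : ((Fin n ⊕ Fin n) → ℝ) → ENNReal), Measurable g → ∀ x,
      (∫⋯∫⁻_pair, g ∂κ) x
        = ∫⁻ s, ∫⁻ t, g (Function.update (Function.update x (Sum.inl a) s) (Sum.inr a) t)
            ∂ κ (Sum.inr a) ∂ κ (Sum.inl a) := by
    intro g hg x
    rw [show pair = insert (Sum.inl a) {Sum.inr a} from rfl,
      lmarginal_insert _ hg (by simp)]
    simp_rw [lmarginal_singleton]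
  have keypt : ∀ x, (∫⋯∫⁻_pair, f' ∂κ) x ≤ (∫⋯∫⁻_pair, f ∂κ) x := by
    intro x
    rw [hpairmarg f' hf'meas x, hpairmarg f hfmeas x]
    have hrep' : ∀ s t : ℝ,
        f' (Function.update (Function.update x (Sum.inl a) s) (Sum.inr a) t)
          = (SF x).indicator 1 t * (SG x).indicator 1 s := by
      intro s t
      by_cases h1 : t ∈ SF x <;> by_cases h2 : s ∈ SG x <;>
        simp [hf'def, Set.indicator_apply, hmem' x s t, h1, h2]
    have hrep : ∀ s t : ℝ,
        f (Function.update (Function.update x (Sum.inl a) s) (Sum.inr a) t)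
          = (SF x ∩ SG x).indicator 1 s := by
      intro s t
      by_cases h1 : s ∈ SF x <;> by_cases h2 : s ∈ SG x <;>
        simp [hfdef, Set.indicator_apply, hmem x s t, h1, h2]
    calc ∫⁻ s, ∫⁻ t, f' (Function.update (Function.update x (Sum.inl a) s) (Sum.inr a) t)
            ∂ κ (Sum.inr a) ∂ κ (Sum.inl a)
        = ∫⁻ s, ∫⁻ t, (SF x).indicator 1 t * (SG x).indicator 1 s
            ∂ κ (Sum.inr a) ∂ κ (Sum.inl a) := by simp_rw [hrep']
      _ = ∫⁻ s, (κ (Sum.inr a)) (SF x) * (SG x).indicator 1 s ∂ κ (Sum.inl a) := by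
            congr 1; funext s
            rw [lintegral_mul_const _ (measurable_one.indicator (hSFm x)),
              lintegral_indicator_one (hSFm x)]
      _ = (κ (Sum.inr a)) (SF x) * (κ (Sum.inl a)) (SG x) := by
            rw [lintegral_const_mul _ (measurable_one.indicator (hSGm x)),
              lintegral_indicator_one (hSGm x)]
      _ = ν a (SF x) * ν a (SG x) := rfl
      _ ≤ ν a (SF x ∩ SG x) := lower_mul_le_inter (hSFl x) (hSGl x)
      _ = ∫⁻ s, (SF x ∩ SG x).indicator 1 s ∂ κ (Sum.inl a) :=
            (lintegral_indicator_one ((hSFm x).inter (hSGm x))).symm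
      _ = ∫⁻ s, ∫⁻ t, f (Function.update (Function.update x (Sum.inl a) s) (Sum.inr a) t)
            ∂ κ (Sum.inr a) ∂ κ (Sum.inl a) := by
            congr 1; funext s
            rw [show ∫⁻ t, f (Function.update (Function.update x (Sum.inl a) s) (Sum.inr a) t)
                ∂ κ (Sum.inr a) = ∫⁻ _, (SF x ∩ SG x).indicator 1 s ∂ κ (Sum.inr a) by
              congr 1; funext t; exact hrep s t]
            rw [lintegral_const, measure_univ, mul_one]
  calc Measure.pi κ A' = ∫⁻ v, f' v ∂ Measure.pi κ := (lintegral_indicator_one hA'm).symm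
    _ = (∫⋯∫⁻_Finset.univ, f' ∂κ) (fun _ => 0) := lintegral_eq_lmarginal_univ _
    _ = (∫⋯∫⁻_(Finset.univ \ pair), (∫⋯∫⁻_pair, f' ∂κ) ∂κ) (fun _ => 0) := by
          rw [show (∫⋯∫⁻_Finset.univ, f' ∂κ)
              = ∫⋯∫⁻_(Finset.univ \ pair), (∫⋯∫⁻_pair, f' ∂κ) ∂κ by
            rw [← lmarginal_union κ f' hf'meas hpair_disj, hsplit]]
    _ ≤ (∫⋯∫⁻_(Finset.univ \ pair), (∫⋯∫⁻_pair, f ∂κ) ∂κ) (fun _ => 0) :=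
          lmarginal_mono (fun x => keypt x) _
    _ = (∫⋯∫⁻_Finset.univ, f ∂κ) (fun _ => 0) := by
          rw [show (∫⋯∫⁻_Finset.univ, f ∂κ)
              = ∫⋯∫⁻_(Finset.univ \ pair), (∫⋯∫⁻_pair, f ∂κ) ∂κ by
            rw [← lmarginal_union κ f hfmeas hpair_disj, hsplit]]
    _ = ∫⁻ v, f v ∂ Measure.pi κ := (lintegral_eq_lmarginal_univ _).symm
    _ = Measure.pi κ A := lintegral_indicator_one hAm

theorem core {m : ℕ} (ν : Fin n → Measure ℝ) [hP : ∀ i, IsProbabilityMeasure (ν i)]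
    (K : Fin m → Set (Fin n → ℝ)) (hKm : ∀ j, MeasurableSet (K j))
    (hKl : ∀ j, IsLowerSet (K j)) (H : Fin m → Finset (Fin n)) (T : Finset (Fin n)) :
    Measure.pi (Sum.elim ν ν) {v | ∀ j, sel (H j) T v ∈ K j}
      ≤ Measure.pi (Sum.elim ν ν) {v | ∀ j, sel (H j) ∅ v ∈ K j} := by
  classical
  induction T using Finset.induction_on with
  | empty => exact le_rfl
  | @insert a T haT IH => exact (core_step ν K hKm hKl H haT).trans IH

lemma map_sel_empty (ν : Fin n → Measure ℝ) [∀ i, IsProbabilityMeasure (ν i)]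
    (Hs : Finset (Fin n)) :
    (Measure.pi (Sum.elim ν ν)).map (sel Hs ∅) = Measure.pi ν := by
  haveI : ∀ k : Fin n ⊕ Fin n, IsProbabilityMeasure (Sum.elim ν ν k) := by
    rintro (i | i) <;> simpa using inferInstanceAs (IsProbabilityMeasure (ν i))
  refine (Measure.pi_eq fun s hs => ?_).symm
  rw [Measure.map_apply (measurable_sel _ _) (MeasurableSet.univ_pi hs)]
  have hpre : sel Hs ∅ ⁻¹' (Set.pi Set.univ s)
      = Set.pi Set.univ (Sum.elim s (fun _ => Set.univ)) := by
    ext v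
    simp only [Set.mem_preimage, Set.mem_univ_pi]
    constructor
    · intro h k
      rcases k with i | i
      · simpa [sel] using h i
      · simp
    · intro h i
      simpa [sel] using h (Sum.inl i)
  rw [hpre, Measure.pi_pi, Fintype.prod_sum_type]
  simp

lemma map_W {Ω : Type*} [MeasurableSpace Ω] (P : Measure Ω) [IsProbabilityMeasure P]
    (X Y : Fin n → Ω → ℝ) (hXm : ∀ i, Measurable (X i)) (hYm : ∀ i, Measurable (Y i))
    (hindep : iIndepFun (Sum.elim X Y) P) :
    P.map (fun ω (k : Fin n ⊕ Fin n) => Sum.elim X Y k ω)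
      = Measure.pi (fun k => P.map (Sum.elim X Y k)) := by
  have hm : ∀ k, Measurable (Sum.elim X Y k) := by rintro (i | i); exacts [hXm i, hYm i]
  haveI : ∀ k, IsProbabilityMeasure (P.map (Sum.elim X Y k)) :=
    fun k => Measure.isProbabilityMeasure_map (hm k).aemeasurable
  refine (Measure.pi_eq fun s hs => ?_).symm
  have hWm : Measurable (fun ω (k : Fin n ⊕ Fin n) => Sum.elim X Y k ω) :=
    measurable_pi_lambda _ fun k => hm k
  rw [Measure.map_apply hWm (MeasurableSet.univ_pi hs)]
  have hpre : (fun ω (k : Fin n ⊕ Fin n) => Sum.elim X Y k ω) ⁻¹' (Set.pi Set.univ s)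
      = ⋂ k, Sum.elim X Y k ⁻¹' s k := by
    ext ω; simp [Set.mem_univ_pi]
  rw [hpre, hindep.meas_iInter (fun k => ⟨s k, hs k, rfl⟩)]
  exact Finset.prod_congr rfl fun k _ => (Measure.map_apply (hm k) (hs k)).symm

/-- Corollary of the PQD ordering theorem: for coordinatewise increasing `f_α`, `X`
with independent coordinates, `Y` an independent copy of `X`, and `Z_α` obtained from
`X` by swapping in the coordinates of `Y` on `H_α`, for every `c ∈ ℝ`,
`P(max_α f_α(Z_α) ≤ c) ≤ P(max_α f_α(X) ≤ c)`, i.e. `max_α f_α(X)` is stochastically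
dominated by `max_α f_α(Z_α)`. -/
theorem pqd_max_st {Ω : Type*} [MeasurableSpace Ω] (P : Measure Ω)
    [IsProbabilityMeasure P] {n m : ℕ}
    (X Y : Fin n → Ω → ℝ)
    (hXm : ∀ i, Measurable (X i)) (hYm : ∀ i, Measurable (Y i))
    (hindep : iIndepFun
      (Sum.elim X Y) P)
    (hid : ∀ i, Measure.map (Y i) P = Measure.map (X i) P)
    (f : Fin m → (Fin n → ℝ) → ℝ) (hf : ∀ j, Monotone (f j))
    (H : Fin m → Finset (Fin n)) (c : ℝ) :
    P {ω | ∀ j, f j (fun i => if i ∈ H j then Y i ω else X i ω) ≤ c} ≤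
      P {ω | ∀ j, f j (fun i => X i ω) ≤ c} := by
  classical
  set ν : Fin n → Measure ℝ := fun i => P.map (X i) with hνdef
  haveI hνP : ∀ i, IsProbabilityMeasure (ν i) :=
    fun i => Measure.isProbabilityMeasure_map (hXm i).aemeasurable
  haveI hκP : ∀ k : Fin n ⊕ Fin n, IsProbabilityMeasure (Sum.elim ν ν k) := by
    rintro (i | i) <;> simpa using inferInstanceAs (IsProbabilityMeasure (ν i))
  set D : Fin n → Set ℝ := fun i => Set.range ((↑) : ℚ → ℝ) ∪ {x | ν i {x} ≠ 0} with hDdef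
  have hDc : ∀ i, (D i).Countable :=
    fun i => (Set.countable_range _).union (countable_atoms (ν i))
  have hDq : ∀ (i) (q : ℚ), (q : ℝ) ∈ D i := fun i q => Or.inl ⟨q, rfl⟩
  have hDa : ∀ (i) (x : ℝ), ν i {x} ≠ 0 → x ∈ D i := fun i x h => Or.inr h
  set L : Fin m → Set (Fin n → ℝ) := fun j => {x | f j x ≤ c} with hLdef
  have hLl : ∀ j, IsLowerSet (L j) := fun j x y hyx hx => le_trans (hf j hyx) hx
  set MM : Fin m → Set (Fin n → ℝ) := fun j => Mset D (L j) with hMMdef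
  set NN : Fin m → Set (Fin n → ℝ) := fun j => Nset D (L j) with hNNdef
  have hMm : ∀ j, MeasurableSet (MM j) := fun j => measurableSet_Mset hDc
  have hNm : ∀ j, MeasurableSet (NN j) := fun j => measurableSet_Nset hDc
  have hMl : ∀ j, IsLowerSet (MM j) := fun j => isLowerSet_Mset
  have hNl : ∀ j, IsLowerSet (NN j) := fun j => isLowerSet_Nset
  have hLM : ∀ j, L j ⊆ MM j := fun j => subset_Mset (hLl j)
  have hNL : ∀ j, NN j ⊆ L j := fun j => Nset_subset (hLl j)
  have hnull : ∀ j, Measure.pi ν (MM j \ NN j) = 0 :=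
    fun j => squeeze_null n ν hνP D hDc hDq hDa (L j) (hLl j)
  set W : Ω → (Fin n ⊕ Fin n) → ℝ := fun ω k => Sum.elim X Y k ω with hWdef
  have hm : ∀ k, Measurable (Sum.elim X Y k) := by rintro (i | i); exacts [hXm i, hYm i]
  have hWm : Measurable W := measurable_pi_lambda _ fun k => hm k
  have hlaw : P.map W = Measure.pi (Sum.elim ν ν) := by
    rw [hWdef, map_W P X Y hXm hYm hindep]
    refine congrArg Measure.pi (funext fun k => ?_)
    rcases k with i | i
    · rfl
    · exact hid i
  -- the sets in the product space
  set AZM : Set ((Fin n ⊕ Fin n) → ℝ) := {v | ∀ j, sel (H j) Finset.univ v ∈ MM j} with hAZMdef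
  set AXM : Set ((Fin n ⊕ Fin n) → ℝ) := {v | ∀ j, sel (H j) ∅ v ∈ MM j} with hAXMdef
  set AXN : Set ((Fin n ⊕ Fin n) → ℝ) := {v | ∀ j, sel (H j) ∅ v ∈ NN j} with hAXNdef
  have hAZMm : MeasurableSet AZM := by
    have : AZM = ⋂ j, sel (H j) Finset.univ ⁻¹' MM j := by ext v; simp [hAZMdef]
    rw [this]; exact MeasurableSet.iInter fun j => (measurable_sel _ _) (hMm j)
  have hAXNm : MeasurableSet AXN := by
    have : AXN = ⋂ j, sel (H j) ∅ ⁻¹' NN j := by ext v; simp [hAXNdef]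
    rw [this]; exact MeasurableSet.iInter fun j => (measurable_sel _ _) (hNm j)
  -- identification of events
  have hZset : {ω | ∀ j, f j (fun i => if i ∈ H j then Y i ω else X i ω) ≤ c}
      ⊆ W ⁻¹' AZM := by
    intro ω hω j
    refine hLM j ?_
    have hsel : sel (H j) Finset.univ (W ω) = fun i => if i ∈ H j then Y i ω else X i ω := by
      funext i
      simp [sel, hWdef]
    rw [hsel]
    exact hω j
  have hXset : W ⁻¹' AXN ⊆ {ω | ∀ j, f j (fun i => X i ω) ≤ c} := by
    intro ω hω j
    have hsel : sel (H j) ∅ (W ω) = fun i => X i ω := by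
      funext i
      simp [sel, hWdef]
    have := hNL j (hω j)
    rw [hsel] at this
    exact this
  -- the chain of inequalities
  calc P {ω | ∀ j, f j (fun i => if i ∈ H j then Y i ω else X i ω) ≤ c}
      ≤ P (W ⁻¹' AZM) := measure_mono hZset
    _ = Measure.pi (Sum.elim ν ν) AZM := by
        rw [← Measure.map_apply hWm hAZMm, hlaw]
    _ ≤ Measure.pi (Sum.elim ν ν) AXM := core ν MM hMm hMl H Finset.univ
    _ ≤ Measure.pi (Sum.elim ν ν)
          (AXN ∪ ⋃ j, sel (H j) ∅ ⁻¹' (MM j \ NN j)) := by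
        refine measure_mono ?_
        intro v hv
        by_cases h : ∀ j, sel (H j) ∅ v ∈ NN j
        · exact Or.inl h
        · push_neg at h
          obtain ⟨j, hj⟩ := h
          exact Or.inr (Set.mem_iUnion.mpr ⟨j, hv j, hj⟩)
    _ ≤ Measure.pi (Sum.elim ν ν) AXN
          + Measure.pi (Sum.elim ν ν) (⋃ j, sel (H j) ∅ ⁻¹' (MM j \ NN j)) := measure_union_le _ _
    _ = Measure.pi (Sum.elim ν ν) AXN := by
        have hz : Measure.pi (Sum.elim ν ν) (⋃ j, sel (H j) ∅ ⁻¹' (MM j \ NN j)) = 0 := by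
          refine measure_iUnion_null fun j => ?_
          have : Measure.pi (Sum.elim ν ν) (sel (H j) ∅ ⁻¹' (MM j \ NN j))
              = Measure.pi ν (MM j \ NN j) := by
            rw [← map_sel_empty ν (H j),
              Measure.map_apply (measurable_sel _ _) ((hMm j).diff (hNm j))]
          rw [this]
          exact hnull j
        rw [hz, add_zero]
    _ = P (W ⁻¹' AXN) := by rw [← Measure.map_apply hWm hAXNm, hlaw]
    _ ≤ P {ω | ∀ j, f j (fun i => X i ω) ≤ c} := measure_mono hXset

end
end

section
/- Measurability of the essential-infimum envelope: if f : S → [0,∞) is measurable on a finite product of probability spaces (S, 𝕊, P) with P the product measure, then for every K ⊆ {1,...,n} the function x ↦ f̲_K(x) = ess inf_{y ∈ [x]_K} f(y) (essential infimum with respect to the product measure on coordinates outside K) is 𝕊-measurable. -/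
open MeasureTheory ENNReal

/-- The essential infimum of `f` over the set of points agreeing with `x` on the
coordinates in `K`, taken with respect to the product measure on the coordinates
outside of `K`. -/
noncomputable def essInfK {n : ℕ} {S : Fin n → Type*} [∀ i, MeasurableSpace (S i)]
    (P : ∀ i, Measure (S i)) (f : (∀ i, S i) → ℝ≥0∞) (K : Finset (Fin n))
    (x : ∀ i, S i) : ℝ≥0∞ :=
  essInf (fun z : ∀ i : {i : Fin n // i ∉ K}, S i =>
      f (fun i => if h : i ∈ K then x i else z ⟨i, h⟩))
    (Measure.pi fun i : {i : Fin n // i ∉ K} => P i)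

/-- essInf of a measurable function as a countable supremum over rational levels. -/
theorem essInf_eq_iSup_rat {α : Type*} [MeasurableSpace α] (μ : Measure α)
    (h : α → ℝ≥0∞) :
    essInf h μ = ⨆ q : ℚ, if μ {z | h z < (Real.toNNReal q : ℝ≥0∞)} = 0
      then ((Real.toNNReal q : ℝ≥0∞)) else 0 := by
  have hS : essInf h μ = sSup {a : ℝ≥0∞ | μ {z | h z < a} = 0} := by
    rw [essInf, Filter.liminf_eq]
    congr 1
    ext a
    simp only [Filter.eventually_iff, mem_ae_iff, Set.mem_setOf_eq]
    congr! 2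
    ext z
    simp [not_le]
  rw [hS]
  apply le_antisymm
  · refine sSup_le fun a ha => ?_
    refine le_of_forall_lt fun b hb => ?_
    obtain ⟨q, hq0, hbq, hqa⟩ := ENNReal.lt_iff_exists_rat_btwn.1 hb
    have hq : μ {z | h z < (Real.toNNReal q : ℝ≥0∞)} = 0 :=
      measure_mono_null (fun z hz => lt_trans hz hqa) ha
    calc b < (Real.toNNReal q : ℝ≥0∞) := hbq
      _ = if μ {z | h z < (Real.toNNReal q : ℝ≥0∞)} = 0
            then ((Real.toNNReal q : ℝ≥0∞)) else 0 := by rw [if_pos hq]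
      _ ≤ _ := le_iSup (fun q : ℚ => if μ {z | h z < (Real.toNNReal q : ℝ≥0∞)} = 0 then ((Real.toNNReal q : ℝ≥0∞)) else 0) q
  · refine iSup_le fun q => ?_
    split_ifs with hq
    · exact le_sSup hq
    · exact zero_le

/-- Measurability of the essential-infimum envelope `x ↦ ess inf_{y ∈ [x]_K} f(y)`. -/
theorem measurable_essInfK {n : ℕ} {S : Fin n → Type*} [∀ i, MeasurableSpace (S i)]
    (P : ∀ i, Measure (S i)) [∀ i, IsProbabilityMeasure (P i)]
    (f : (∀ i, S i) → ℝ≥0∞) (hf : Measurable f) (K : Finset (Fin n)) :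
    Measurable (essInfK P f K) := by
  classical
  set ν : Measure (∀ i : {i : Fin n // i ∉ K}, S i) :=
    Measure.pi fun i : {i : Fin n // i ∉ K} => P i with hν
  have hcomb : Measurable fun p : (∀ i, S i) × (∀ i : {i : Fin n // i ∉ K}, S i) =>
      (fun i => if h : i ∈ K then p.1 i else p.2 ⟨i, h⟩ : ∀ i, S i) := by
    apply measurable_pi_lambda
    intro i
    by_cases h : i ∈ K
    · simp only [h, dif_pos]
      exact (measurable_pi_apply i).comp measurable_fst
    · simp only [h, dif_neg, not_false_iff]
      exact (measurable_pi_apply _).comp measurable_snd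
  have hF : Measurable fun p : (∀ i, S i) × (∀ i : {i : Fin n // i ∉ K}, S i) =>
      f (fun i => if h : i ∈ K then p.1 i else p.2 ⟨i, h⟩) := hf.comp hcomb
  have key : essInfK P f K = fun x => ⨆ q : ℚ,
      if ν {z | f (fun i => if h : i ∈ K then x i else z ⟨i, h⟩) < (Real.toNNReal q : ℝ≥0∞)} = 0
        then ((Real.toNNReal q : ℝ≥0∞)) else 0 := by
    funext x
    exact essInf_eq_iSup_rat ν _
  rw [key]
  refine Measurable.iSup fun q => ?_
  have hμm : Measurable fun x : ∀ i, S i =>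
      ν {z | f (fun i => if h : i ∈ K then x i else z ⟨i, h⟩) < (Real.toNNReal q : ℝ≥0∞)} := by
    have hs : MeasurableSet {p : (∀ i, S i) × (∀ i : {i : Fin n // i ∉ K}, S i) |
        f (fun i => if h : i ∈ K then p.1 i else p.2 ⟨i, h⟩) < (Real.toNNReal q : ℝ≥0∞)} :=
      measurableSet_lt hF measurable_const
    exact measurable_measure_prodMk_left hs
  exact Measurable.ite (hμm (measurableSet_singleton 0)) measurable_const measurable_const
end
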